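/- Let (g,[·,·]_g,φ_g) and (g*,[·,·]_{g*},φ_{g*}) be Hom-Lie algebras such that (g⊕g*; g, g*) is a Manin triple for Hom-Lie algebras with the bilinear form B(x+ξ,y+η) = ξ(y) + η(x). Then φ_{g*} = (φ_g⁻¹)* and (g,g*) is a purely Hom-Lie bialgebra. -/

import Mathlib

open LinearMap Module

/-- A (regular, i.e. multiplicative with invertible structure map) Hom-Lie algebra. -/
structure HomLieAlgebra (K g : Type*) [Field K] [AddCommGroup g] [Module K g] where
  bracket : g →ₗ[K] g →ₗ[K] g
  phi : g ≃ₗ[K] g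
  skew : ∀ x y, bracket x y = - bracket y x
  phi_bracket : ∀ x y, phi (bracket x y) = bracket (phi x) (phi y)
  jacobi : ∀ x y z,
    bracket (phi x) (bracket y z) + bracket (phi y) (bracket z x)
      + bracket (phi z) (bracket x y) = 0

variable {K g V : Type*} [Field K] [AddCommGroup g] [Module K g]
  [AddCommGroup V] [Module K V]

/-- `ρ` is a representation of the Hom-Lie algebra `L` on `V` with respect to `β`. -/
def HomLieAlgebra.IsRep (L : HomLieAlgebra K g) (β : V ≃ₗ[K] V)
    (ρ : g →ₗ[K] V →ₗ[K] V) : Prop :=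
  (∀ x u, ρ (L.phi x) (β u) = β (ρ x u)) ∧
  (∀ x y u, ρ (L.bracket x y) (β u) = ρ (L.phi x) (ρ y u) - ρ (L.phi y) (ρ x u))

/-- The adjoint action of `x ∈ g` on `∧²g`, encoded on skew bilinear forms on `g*`. -/
def adExt (L : HomLieAlgebra K g) (x : g) (W : Dual K g → Dual K g → K)
    (ξ η : Dual K g) : K :=
  W (ξ ∘ₗ L.bracket x) (η ∘ₗ L.phi.toLinearMap)
    + W (ξ ∘ₗ L.phi.toLinearMap) (η ∘ₗ L.bracket x)

/-- The canonical symmetric bilinear form `B(x+ξ, y+η) = ξ(y) + η(x)`. -/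
def dbForm (p q : g × Dual K g) : K := p.2 q.1 + q.2 p.1

set_option maxHeartbeats 2000000

/-- if `(g ⊕ g*; g, g*)` is a Manin triple for Hom-Lie algebras with the
canonical bilinear form, then the structure map of `g*` is `(φ_g⁻¹)*` and `(g, g*)` is a
purely Hom-Lie bialgebra. -/
theorem manin_to_bialgebra (Lg : HomLieAlgebra K g)
    (Lst : HomLieAlgebra K (Dual K g)) (LV : HomLieAlgebra K (g × Dual K g))
    -- the structure map of the double is φ_g ⊕ φ_{g*}
    (hphi : ∀ p : g × Dual K g, LV.phi p = (Lg.phi p.1, Lst.phi p.2))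
    -- g and g* are Hom-Lie subalgebras
    (hsub₁ : ∀ x y : g, LV.bracket (x, 0) (y, 0) = (Lg.bracket x y, 0))
    (hsub₂ : ∀ ξ η : Dual K g, LV.bracket (0, ξ) (0, η) = (0, Lst.bracket ξ η))
    -- the bilinear form is invariant (quadratic Hom-Lie algebra)
    (hinv₁ : ∀ p q r : g × Dual K g,
      dbForm (LV.bracket p q) (LV.phi r) = - dbForm (LV.phi q) (LV.bracket p r))
    (hinv₂ : ∀ p q : g × Dual K g, dbForm (LV.phi p) (LV.phi q) = dbForm p q) :
    -- conclusion: φ_{g*} = (φ_g⁻¹)* and the bialgebra compatibility condition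
    (∀ (ξ : Dual K g) (x : g), Lst.phi ξ x = ξ (Lg.phi.symm x)) ∧
    (∀ (x y : g) (ξ η : Dual K g),
      Lst.bracket ξ η (Lg.bracket x y)
        = adExt Lg (Lg.phi.symm x) (fun ξ' η' => Lst.bracket ξ' η' y) ξ η
          - adExt Lg (Lg.phi.symm y) (fun ξ' η' => Lst.bracket ξ' η' x) ξ η) := by

  classical
  -- φ_{g*} composed with φ_g is the identity pairing
  have hphi0 : ∀ (ξ : Dual K g) (x : g), Lst.phi ξ (Lg.phi x) = ξ x := by
    intro ξ x
    have h := hinv₂ (x, 0) (0, ξ)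
    simpa [dbForm, hphi] using h
  have part1 : ∀ (ξ : Dual K g) (x : g), Lst.phi ξ x = ξ (Lg.phi.symm x) := by
    intro ξ x
    have h := hphi0 ξ (Lg.phi.symm x)
    simpa using h
  have hst : ∀ ξ : Dual K g, Lst.phi (ξ ∘ₗ Lg.phi.toLinearMap) = ξ := by
    intro ξ; ext x; simp [part1]
  have hstm : ∀ ξ : Dual K g, Lst.phi ξ = ξ ∘ₗ Lg.phi.symm.toLinearMap := by
    intro ξ; ext x; simp [part1]
  -- value of the g*-component of the mixed bracket
  have Bval : ∀ (x z : g) (η : Dual K g),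
      (LV.bracket (x, 0) (0, η)).2 (Lg.phi z) = - Lst.phi η (Lg.bracket x z) := by
    intro x z η
    have h := hinv₁ (x, 0) (0, η) (z, 0)
    simpa [dbForm, hphi, hsub₁] using h
  -- value of the g-component of the mixed bracket
  have Aval : ∀ (x : g) (ξ η : Dual K g),
      Lst.phi η ((LV.bracket (x, 0) (0, ξ)).1) = Lst.bracket ξ η (Lg.phi x) := by
    intro x ξ η
    have h := hinv₁ (0, ξ) (x, 0) (0, η)
    rw [LV.skew (0, ξ) (x, 0)] at h
    simpa [dbForm, hphi, hsub₂] using h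
  have star : ∀ (x : g) (ξ θ : Dual K g),
      θ ((LV.bracket (x, 0) (0, ξ)).1)
        = Lst.bracket ξ (θ ∘ₗ Lg.phi.toLinearMap) (Lg.phi x) := by
    intro x ξ θ
    have h := Aval x ξ (θ ∘ₗ Lg.phi.toLinearMap)
    rwa [hst] at h
  -- the g*-component of the mixed bracket, as a linear functional
  have hBfun : ∀ (b : g) (ξ : Dual K g),
      (LV.bracket (b, 0) (0, ξ ∘ₗ Lg.phi.toLinearMap)).2
        = - ((ξ ∘ₗ Lg.bracket b) ∘ₗ Lg.phi.symm.toLinearMap) := by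
    intro b ξ
    ext u
    have h := Bval b (Lg.phi.symm u) (ξ ∘ₗ Lg.phi.toLinearMap)
    rw [hst, LinearEquiv.apply_symm_apply] at h
    simpa using h
  -- transport of the g*-bracket along φ
  have hshift : ∀ (ζ θ : Dual K g) (u : g),
      Lst.bracket (ζ ∘ₗ Lg.phi.symm.toLinearMap) (θ ∘ₗ Lg.phi.symm.toLinearMap)
        (Lg.phi u) = Lst.bracket ζ θ u := by
    intro ζ θ u
    rw [← hstm ζ, ← hstm θ, ← Lst.phi_bracket, hphi0]
  have hinvbr : ∀ u v : g,
      Lg.phi.symm (Lg.bracket u v) = Lg.bracket (Lg.phi.symm u) (Lg.phi.symm v) := by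
    intro u v
    apply Lg.phi.injective
    simp [Lg.phi_bracket]
  constructor
  · exact part1
  intro x y ξ η
  set a : g := Lg.phi.symm x with ha
  set b : g := Lg.phi.symm y with hb
  set ξ' : Dual K g := ξ ∘ₗ Lg.phi.toLinearMap with hxi
  have hax : Lg.phi a = x := Lg.phi.apply_symm_apply x
  have hby : Lg.phi b = y := Lg.phi.apply_symm_apply y
  set wb : g × Dual K g := LV.bracket (b, 0) (0, ξ') with hwb
  set wa : g × Dual K g := LV.bracket (a, 0) (0, ξ') with hwa
  -- structure map values in the double
  have e1 : LV.phi ((0 : g), ξ') = ((0 : g), ξ) := by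
    rw [hphi]; simp [hxi, hst]
  have e2 : LV.phi (a, (0 : Dual K g)) = (x, 0) := by
    rw [hphi]; simp [hax]
  have e3 : LV.phi (b, (0 : Dual K g)) = (y, 0) := by
    rw [hphi]; simp [hby]
  have jac := LV.jacobi ((0 : g), ξ') (a, (0 : Dual K g)) (b, (0 : Dual K g))
  rw [e1, e2, e3, hsub₁ a b, LV.skew ((0 : g), ξ) (Lg.bracket a b, 0),
    LV.skew ((0 : g), ξ') (a, (0 : Dual K g)), ← hwb, ← hwa] at jac
  -- split the mixed arguments into components
  have hsplitb : LV.bracket (x, (0 : Dual K g)) wb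
      = (Lg.bracket x wb.1, 0) + LV.bracket (x, 0) (0, wb.2) := by
    conv_lhs => rw [show wb = (wb.1, (0 : Dual K g)) + ((0 : g), wb.2) by simp]
    rw [map_add, hsub₁]
  have hsplita : LV.bracket (y, (0 : Dual K g)) wa
      = (Lg.bracket y wa.1, 0) + LV.bracket (y, 0) (0, wa.2) := by
    conv_lhs => rw [show wa = (wa.1, (0 : Dual K g)) + ((0 : g), wa.2) by simp]
    rw [map_add, hsub₁]
  rw [map_neg, hsplitb, hsplita] at jac
  -- take the g-component and pair with φ_{g*} η
  have jacF := congrArg (fun p : g × Dual K g => Lst.phi η p.1) jac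
  simp only [Prod.fst_add, Prod.fst_neg, Prod.fst_zero, map_add, map_neg, map_zero] at jacF
  -- identify each of the five scalar terms
  have t1 : Lst.phi η ((LV.bracket (Lg.bracket a b, (0 : Dual K g)) (0, ξ)).1)
      = Lst.bracket ξ η (Lg.bracket x y) := by
    rw [Aval, Lg.phi_bracket, hax, hby]
  have t2 : Lst.phi η (Lg.bracket x wb.1)
      = Lst.bracket ξ' (η ∘ₗ Lg.bracket a) y := by
    have h0 : Lst.phi η (Lg.bracket x wb.1)
        = ((η ∘ₗ Lg.bracket a) ∘ₗ Lg.phi.symm.toLinearMap) wb.1 := by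
      rw [hstm]
      simp [hinvbr, ← ha]
    rw [h0, hwb, star]
    have hcomp : ((η ∘ₗ Lg.bracket a) ∘ₗ Lg.phi.symm.toLinearMap) ∘ₗ Lg.phi.toLinearMap
        = η ∘ₗ Lg.bracket a := by ext u; simp
    rw [hcomp, hby]
  have t2' : Lst.phi η (Lg.bracket y wa.1)
      = Lst.bracket ξ' (η ∘ₗ Lg.bracket b) x := by
    have h0 : Lst.phi η (Lg.bracket y wa.1)
        = ((η ∘ₗ Lg.bracket b) ∘ₗ Lg.phi.symm.toLinearMap) wa.1 := by
      rw [hstm]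
      simp [hinvbr, ← hb]
    rw [h0, hwa, star]
    have hcomp : ((η ∘ₗ Lg.bracket b) ∘ₗ Lg.phi.symm.toLinearMap) ∘ₗ Lg.phi.toLinearMap
        = η ∘ₗ Lg.bracket b := by ext u; simp
    rw [hcomp, hax]
  have hshift' : ∀ (ζ : Dual K g) (u : g),
      Lst.bracket (- (ζ ∘ₗ Lg.phi.symm.toLinearMap)) η (Lg.phi u)
        = - Lst.bracket ζ (η ∘ₗ Lg.phi.toLinearMap) u := by
    intro ζ u
    have hc : η = (η ∘ₗ Lg.phi.toLinearMap) ∘ₗ Lg.phi.symm.toLinearMap := by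
      ext v; simp
    rw [map_neg, LinearMap.neg_apply, LinearMap.neg_apply, neg_inj]
    conv_lhs => rw [hc]
    rw [hshift]
  have hB2 : wb.2 = - ((ξ ∘ₗ Lg.bracket b) ∘ₗ Lg.phi.symm.toLinearMap) := by
    rw [hwb, hxi]; exact hBfun b ξ
  have hA2 : wa.2 = - ((ξ ∘ₗ Lg.bracket a) ∘ₗ Lg.phi.symm.toLinearMap) := by
    rw [hwa, hxi]; exact hBfun a ξ
  have t3 : Lst.phi η ((LV.bracket (x, (0 : Dual K g)) (0, wb.2)).1)
      = - Lst.bracket (ξ ∘ₗ Lg.bracket b) (η ∘ₗ Lg.phi.toLinearMap) x := by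
    rw [Aval, hB2, hshift']
  have t3' : Lst.phi η ((LV.bracket (y, (0 : Dual K g)) (0, wa.2)).1)
      = - Lst.bracket (ξ ∘ₗ Lg.bracket a) (η ∘ₗ Lg.phi.toLinearMap) y := by
    rw [Aval, hA2, hshift']
  rw [t1, t2, t2', t3, t3'] at jacF
  simp only [adExt]
  rw [hxi] at jacF
  linear_combination -jacF
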